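/- The number of semistandard Young tableaux of rectangular shape with k rows and 2 columns and entries in [n] equals a_{k,n,2} = Π_{i=1}^{k} Π_{j=1}^{2} (n - i + j)/(k + 2 - i - j + 1). -/

import Mathlib

open Finset

/-- `allLT I J` means `max I < min J` (vacuously true if either set is empty). -/
def allLT (I J : Finset ℕ) : Prop := ∀ i ∈ I, ∀ j ∈ J, i < j

/-- `I` and `J` are weakly separated. -/
def WeaklySeparated (I J : Finset ℕ) : Prop :=
  (∃ I1 I2 : Finset ℕ, Disjoint I1 I2 ∧ I1 ∪ I2 = I \ J ∧
      allLT I1 (J \ I) ∧ allLT (J \ I) I2) ∨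
  (∃ J1 J2 : Finset ℕ, Disjoint J1 J2 ∧ J1 ∪ J2 = J \ I ∧
      allLT J1 (I \ J) ∧ allLT (I \ J) J2)

/-- the set `{i_a, i_{a+1}, ..., i_b}` of entries of `I` in (1-indexed) positions `a` to `b`. -/
def posSlice (I : Finset ℕ) (a b : ℕ) : Finset ℕ :=
  I.filter fun x => a ≤ (I.filter (· ≤ x)).card ∧ (I.filter (· ≤ x)).card ≤ b

/-- the pair of `k`-subsets `I`, `J` is noncrossing. -/
def Noncrossing (k : ℕ) (I J : Finset ℕ) : Prop :=
  ∀ a b : ℕ, 1 ≤ a → a < b → b ≤ k →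
    WeaklySeparated (posSlice I a b) (posSlice J a b) ∨
    posSlice I (a + 1) (b - 1) ≠ posSlice J (a + 1) (b - 1)

/-- the `a`-th smallest entry of `I` (1-indexed). -/
def nth (I : Finset ℕ) (a : ℕ) : ℕ := (I.sort (· ≤ ·)).getD (a - 1) 0

/-- `T` is a rectangular semistandard Young tableau with entries in `[n]`. -/
def IsSSYT {k m : ℕ} (n : ℕ) (T : Fin k → Fin m → ℕ) : Prop :=
  (∀ i j, T i j ∈ Finset.Icc 1 n) ∧
  (∀ i (j j' : Fin m), j ≤ j' → T i j ≤ T i j') ∧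
  (∀ (i i' : Fin k) j, i < i' → T i j < T i' j)


/-- prefix-domination: every initial segment of `[0,t)` contains at least as many
elements of `A` as of `B`. -/
def Dom (A B : Finset ℕ) : Prop :=
  ∀ t : ℕ, (B.filter (· < t)).card ≤ (A.filter (· < t)).card

open scoped Classical in
/-- number of pairs `(A,B)` of subsets of `range n` with `|A| = a`, `|B| = b`, `Dom A B`. -/
noncomputable def Fc (n a b : ℕ) : ℕ :=
  (((range n).powersetCard a ×ˢ (range n).powersetCard b).filter
    fun p => Dom p.1 p.2).card

lemma filter_lt_of_subset_range {X : Finset ℕ} {n t : ℕ} (hX : X ⊆ range n) (h : n ≤ t) :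
    X.filter (· < t) = X := by
  apply filter_true_of_mem
  intro x hx
  have := mem_range.1 (hX hx)
  omega

lemma dom_card {A B : Finset ℕ} {n : ℕ} (hA : A ⊆ range n) (hB : B ⊆ range n)
    (h : Dom A B) : B.card ≤ A.card := by
  have := h n
  rwa [filter_lt_of_subset_range hA le_rfl, filter_lt_of_subset_range hB le_rfl] at this

lemma erase_subset_range {X : Finset ℕ} {n : ℕ} (hX : X ⊆ range (n+1)) :
    X.erase n ⊆ range n := by
  intro x hx
  have h1 := mem_of_mem_erase hx
  have h2 := ne_of_mem_erase hx
  have := mem_range.1 (hX h1)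
  exact mem_range.2 (by omega)

lemma filter_lt_erase {X : Finset ℕ} {n t : ℕ} (ht : t ≤ n) :
    (X.erase n).filter (· < t) = X.filter (· < t) := by
  ext x
  simp only [mem_filter, mem_erase]
  constructor
  · rintro ⟨⟨_, hx⟩, hlt⟩; exact ⟨hx, hlt⟩
  · rintro ⟨hx, hlt⟩; exact ⟨⟨by omega, hx⟩, hlt⟩

lemma dom_erase {A B : Finset ℕ} {n : ℕ} (hA : A ⊆ range (n+1)) (hB : B ⊆ range (n+1)) :
    Dom A B ↔ Dom (A.erase n) (B.erase n) ∧ B.card ≤ A.card := by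
  constructor
  · intro h
    refine ⟨?_, dom_card hA hB h⟩
    intro t
    rcases le_or_gt t n with ht | ht
    · rw [filter_lt_erase ht, filter_lt_erase ht]; exact h t
    · rw [filter_lt_of_subset_range (erase_subset_range hA) (by omega),
        filter_lt_of_subset_range (erase_subset_range hB) (by omega)]
      have := h n
      rwa [← filter_lt_erase (X := A) (le_refl n), ← filter_lt_erase (X := B) (le_refl n),
        filter_lt_of_subset_range (erase_subset_range hA) le_rfl,
        filter_lt_of_subset_range (erase_subset_range hB) le_rfl] at this
  · rintro ⟨h, hcard⟩
    intro t
    rcases le_or_gt t n with ht | ht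
    · rw [← filter_lt_erase (X := A) ht, ← filter_lt_erase (X := B) ht]; exact h t
    · rwa [filter_lt_of_subset_range hA (by omega), filter_lt_of_subset_range hB (by omega)]

lemma Fc_eq_zero {n a b : ℕ} (h : a < b) : Fc n a b = 0 := by
  classical
  rw [Fc, card_eq_zero, filter_eq_empty_iff]
  rintro ⟨A, B⟩ hp hd
  simp only [mem_product, mem_powersetCard] at hp
  have := dom_card hp.1.1 hp.2.1 hd
  omega

lemma Fc_b_zero (n a : ℕ) : Fc n a 0 = n.choose a := by
  classical
  rw [Fc]
  rw [filter_true_of_mem]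
  · rw [card_product, card_powersetCard, card_range, powersetCard_zero, card_singleton, mul_one]
  · rintro ⟨A, B⟩ hp
    simp only [mem_product, mem_powersetCard] at hp
    intro t
    have : B = ∅ := card_eq_zero.1 hp.2.2
    simp [this]

lemma subset_range_of_not_mem {X : Finset ℕ} {n : ℕ} (hX : X ⊆ range (n+1)) (hn : n ∉ X) :
    X ⊆ range n := by
  intro x hx
  have := mem_range.1 (hX hx)
  have : x ≠ n := fun h => hn (h ▸ hx)
  exact mem_range.2 (by omega)

lemma not_mem_of_subset_range {X : Finset ℕ} {n : ℕ} (hX : X ⊆ range n) : n ∉ X :=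
  fun h => by simpa using mem_range.1 (hX h)

open scoped Classical in
lemma Fc_rec (n a b : ℕ) (hba : b ≤ a) :
    Fc (n+1) (a+1) (b+1) = Fc n (a+1) (b+1) + Fc n a (b+1) + Fc n (a+1) b + Fc n a b := by
  have h1 := card_filter_add_card_filter_not
      (s := ((range (n+1)).powersetCard (a+1) ×ˢ (range (n+1)).powersetCard (b+1)).filter
        (fun p => Dom p.1 p.2)) (p := fun p => n ∈ p.1)
  have h2 := card_filter_add_card_filter_not
      (s := ((range (n+1)).powersetCard (a+1) ×ˢ (range (n+1)).powersetCard (b+1)).filter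
        (fun p => Dom p.1 p.2 ∧ n ∈ p.1)) (p := fun p => n ∈ p.2)
  have h3 := card_filter_add_card_filter_not
      (s := ((range (n+1)).powersetCard (a+1) ×ˢ (range (n+1)).powersetCard (b+1)).filter
        (fun p => Dom p.1 p.2 ∧ ¬ n ∈ p.1)) (p := fun p => n ∈ p.2)
  simp only [filter_filter] at h1 h2 h3
  -- class (n ∈ A, n ∈ B)
  have c11 : (((range (n+1)).powersetCard (a+1) ×ˢ (range (n+1)).powersetCard (b+1)).filter
      (fun p => (Dom p.1 p.2 ∧ n ∈ p.1) ∧ n ∈ p.2)).card = Fc n a b := by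
    rw [Fc]
    apply card_nbij' (i := fun p => (p.1.erase n, p.2.erase n))
      (j := fun p => (insert n p.1, insert n p.2))
    · rintro ⟨A, B⟩ hp
      simp only [mem_coe, mem_filter, mem_product, mem_powersetCard] at hp ⊢
      obtain ⟨⟨⟨hA, hAc⟩, hB, hBc⟩, ⟨hd, hnA⟩, hnB⟩ := hp
      refine ⟨⟨⟨erase_subset_range hA, ?_⟩, erase_subset_range hB, ?_⟩,
        ((dom_erase hA hB).1 hd).1⟩
      · rw [card_erase_of_mem hnA, hAc]; omega
      · rw [card_erase_of_mem hnB, hBc]; omega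
    · rintro ⟨A, B⟩ hp
      simp only [mem_coe, mem_filter, mem_product, mem_powersetCard] at hp ⊢
      obtain ⟨⟨⟨hA, hAc⟩, hB, hBc⟩, hd⟩ := hp
      have hnA := not_mem_of_subset_range hA
      have hnB := not_mem_of_subset_range hB
      have hAr : insert n A ⊆ range (n+1) :=
        insert_subset (mem_range.2 (by omega)) (hA.trans (range_subset_range.2 (by omega)))
      have hBr : insert n B ⊆ range (n+1) :=
        insert_subset (mem_range.2 (by omega)) (hB.trans (range_subset_range.2 (by omega)))
      refine ⟨⟨⟨hAr, ?_⟩, hBr, ?_⟩, ⟨?_, by simp⟩, by simp⟩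
      · rw [card_insert_of_notMem hnA, hAc]
      · rw [card_insert_of_notMem hnB, hBc]
      · rw [dom_erase hAr hBr, erase_insert hnA, erase_insert hnB]
        refine ⟨hd, ?_⟩
        rw [card_insert_of_notMem hnA, card_insert_of_notMem hnB]
        exact Nat.succ_le_succ (dom_card hA hB hd)
    · rintro ⟨A, B⟩ hp
      simp only [mem_coe, mem_filter] at hp
      exact Prod.ext (insert_erase hp.2.1.2) (insert_erase hp.2.2)
    · rintro ⟨A, B⟩ hp
      simp only [mem_coe, mem_filter, mem_product, mem_powersetCard] at hp
      exact Prod.ext (erase_insert (not_mem_of_subset_range hp.1.1.1))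
        (erase_insert (not_mem_of_subset_range hp.1.2.1))
  -- class (n ∈ A, n ∉ B)
  have c10 : (((range (n+1)).powersetCard (a+1) ×ˢ (range (n+1)).powersetCard (b+1)).filter
      (fun p => (Dom p.1 p.2 ∧ n ∈ p.1) ∧ ¬ n ∈ p.2)).card = Fc n a (b+1) := by
    rw [Fc]
    apply card_nbij' (i := fun p => (p.1.erase n, p.2))
      (j := fun p => (insert n p.1, p.2))
    · rintro ⟨A, B⟩ hp
      simp only [mem_coe, mem_filter, mem_product, mem_powersetCard] at hp ⊢
      obtain ⟨⟨⟨hA, hAc⟩, hB, hBc⟩, ⟨hd, hnA⟩, hnB⟩ := hp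
      refine ⟨⟨⟨erase_subset_range hA, ?_⟩, subset_range_of_not_mem hB hnB, hBc⟩, ?_⟩
      · rw [card_erase_of_mem hnA, hAc]; omega
      · have := ((dom_erase hA hB).1 hd).1
        rwa [erase_eq_of_notMem hnB] at this
    · rintro ⟨A, B⟩ hp
      simp only [mem_coe, mem_filter, mem_product, mem_powersetCard] at hp ⊢
      obtain ⟨⟨⟨hA, hAc⟩, hB, hBc⟩, hd⟩ := hp
      have hnA := not_mem_of_subset_range hA
      have hnB := not_mem_of_subset_range hB
      have hAr : insert n A ⊆ range (n+1) :=
        insert_subset (mem_range.2 (by omega)) (hA.trans (range_subset_range.2 (by omega)))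
      have hBr : B ⊆ range (n+1) := hB.trans (range_subset_range.2 (by omega))
      refine ⟨⟨⟨hAr, ?_⟩, hBr, hBc⟩, ⟨?_, by simp⟩, hnB⟩
      · rw [card_insert_of_notMem hnA, hAc]
      · rw [dom_erase hAr hBr, erase_insert hnA, erase_eq_of_notMem hnB]
        refine ⟨hd, ?_⟩
        rw [card_insert_of_notMem hnA, hAc, hBc]
        have := dom_card hA hB hd
        omega
    · rintro ⟨A, B⟩ hp
      simp only [mem_coe, mem_filter] at hp
      exact Prod.ext (insert_erase hp.2.1.2) rfl
    · rintro ⟨A, B⟩ hp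
      simp only [mem_coe, mem_filter, mem_product, mem_powersetCard] at hp
      exact Prod.ext (erase_insert (not_mem_of_subset_range hp.1.1.1)) rfl
  -- class (n ∉ A, n ∈ B)
  have c01 : (((range (n+1)).powersetCard (a+1) ×ˢ (range (n+1)).powersetCard (b+1)).filter
      (fun p => (Dom p.1 p.2 ∧ ¬ n ∈ p.1) ∧ n ∈ p.2)).card = Fc n (a+1) b := by
    rw [Fc]
    apply card_nbij' (i := fun p => (p.1, p.2.erase n))
      (j := fun p => (p.1, insert n p.2))
    · rintro ⟨A, B⟩ hp
      simp only [mem_coe, mem_filter, mem_product, mem_powersetCard] at hp ⊢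
      obtain ⟨⟨⟨hA, hAc⟩, hB, hBc⟩, ⟨hd, hnA⟩, hnB⟩ := hp
      refine ⟨⟨⟨subset_range_of_not_mem hA hnA, hAc⟩, erase_subset_range hB, ?_⟩, ?_⟩
      · rw [card_erase_of_mem hnB, hBc]; omega
      · have := ((dom_erase hA hB).1 hd).1
        rwa [erase_eq_of_notMem hnA] at this
    · rintro ⟨A, B⟩ hp
      simp only [mem_coe, mem_filter, mem_product, mem_powersetCard] at hp ⊢
      obtain ⟨⟨⟨hA, hAc⟩, hB, hBc⟩, hd⟩ := hp
      have hnA := not_mem_of_subset_range hA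
      have hnB := not_mem_of_subset_range hB
      have hAr : A ⊆ range (n+1) := hA.trans (range_subset_range.2 (by omega))
      have hBr : insert n B ⊆ range (n+1) :=
        insert_subset (mem_range.2 (by omega)) (hB.trans (range_subset_range.2 (by omega)))
      refine ⟨⟨⟨hAr, hAc⟩, hBr, ?_⟩, ⟨?_, hnA⟩, by simp⟩
      · rw [card_insert_of_notMem hnB, hBc]
      · rw [dom_erase hAr hBr, erase_insert hnB, erase_eq_of_notMem hnA]
        refine ⟨hd, ?_⟩
        rw [card_insert_of_notMem hnB, hAc, hBc]
        omega
    · rintro ⟨A, B⟩ hp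
      simp only [mem_coe, mem_filter] at hp
      exact Prod.ext rfl (insert_erase hp.2.2)
    · rintro ⟨A, B⟩ hp
      simp only [mem_coe, mem_filter, mem_product, mem_powersetCard] at hp
      exact Prod.ext rfl (erase_insert (not_mem_of_subset_range hp.1.2.1))
  -- class (n ∉ A, n ∉ B)
  have c00 : (((range (n+1)).powersetCard (a+1) ×ˢ (range (n+1)).powersetCard (b+1)).filter
      (fun p => (Dom p.1 p.2 ∧ ¬ n ∈ p.1) ∧ ¬ n ∈ p.2)).card = Fc n (a+1) (b+1) := by
    rw [Fc]
    apply card_nbij' (i := fun p => p) (j := fun p => p)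
    · rintro ⟨A, B⟩ hp
      simp only [mem_coe, mem_filter, mem_product, mem_powersetCard] at hp ⊢
      obtain ⟨⟨⟨hA, hAc⟩, hB, hBc⟩, ⟨hd, hnA⟩, hnB⟩ := hp
      exact ⟨⟨⟨subset_range_of_not_mem hA hnA, hAc⟩, subset_range_of_not_mem hB hnB, hBc⟩, hd⟩
    · rintro ⟨A, B⟩ hp
      simp only [mem_coe, mem_filter, mem_product, mem_powersetCard] at hp ⊢
      obtain ⟨⟨⟨hA, hAc⟩, hB, hBc⟩, hd⟩ := hp
      exact ⟨⟨⟨hA.trans (range_subset_range.2 (by omega)), hAc⟩,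
        hB.trans (range_subset_range.2 (by omega)), hBc⟩, ⟨hd,
        not_mem_of_subset_range hA⟩, not_mem_of_subset_range hB⟩
    · intro _ _; rfl
    · intro _ _; rfl
  have hS : Fc (n+1) (a+1) (b+1) =
      (((range (n+1)).powersetCard (a+1) ×ˢ (range (n+1)).powersetCard (b+1)).filter
        (fun p => Dom p.1 p.2)).card := rfl
  omega

/-- closed form value -/
noncomputable def Gq (n a b : ℕ) : ℚ :=
  (n.choose a : ℚ) * n.choose b -
    (n.choose (a+1) : ℚ) * (if b = 0 then 0 else (n.choose (b-1) : ℚ))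

lemma Fc_empty_right (a b : ℕ) (hb : b ≠ 0) : Fc 0 a b = 0 := by
  classical
  rw [Fc, card_eq_zero, filter_eq_empty_iff]
  rintro ⟨A, B⟩ hp _
  simp only [mem_product, mem_powersetCard] at hp
  have h1 : B ⊆ range 0 := hp.2.1
  have : B.card = 0 := by
    rw [card_eq_zero]
    simpa [subset_empty] using h1
  omega

lemma Fc_closed : ∀ n a b : ℕ, b ≤ a + 1 → (Fc n a b : ℚ) = Gq n a b := by
  intro n
  induction n with
  | zero =>
    intro a b hba
    rcases b with _ | b'
    · rw [Fc_b_zero, Gq]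
      simp
    · rw [Fc_empty_right a (b'+1) (Nat.succ_ne_zero b'), Gq]
      have h1 : Nat.choose 0 (b'+1) = 0 := Nat.choose_eq_zero_of_lt (by omega)
      have h2 : Nat.choose 0 (a+1) = 0 := Nat.choose_eq_zero_of_lt (by omega)
      rw [h1, h2]
      simp
  | succ n ih =>
    intro a b hba
    rcases b with _ | b'
    · rw [Fc_b_zero, Gq]
      simp
    · rcases Nat.lt_or_ge a (b'+1) with hl | hl
      · -- b = a + 1
        have hab : b' = a := by omega
        subst hab
        rw [Fc_eq_zero hl, Gq]
        simp [Nat.succ_sub_one]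
        ring
      · -- b'+1 ≤ a, so a = a'+1
        obtain ⟨a', rfl⟩ : ∃ a', a = a' + 1 := ⟨a - 1, by omega⟩
        have hba' : b' ≤ a' := by omega
        rw [Fc_rec n a' b' hba']
        push_cast
        rw [ih (a'+1) (b'+1) (by omega), ih a' (b'+1) (by omega),
          ih (a'+1) b' (by omega), ih a' b' (by omega)]
        simp only [Gq, if_neg (Nat.succ_ne_zero b'), Nat.succ_sub_one]
        rcases b' with _ | b''
        · simp only [if_pos rfl, Nat.choose_zero_right, Nat.choose_succ_succ]
          push_cast
          ring
        · simp only [if_neg (Nat.succ_ne_zero b''), Nat.succ_sub_one,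
            Nat.choose_succ_succ]
          push_cast
          ring

lemma card_filter_lt_image {k : ℕ} (f : Fin k → ℕ) (hf : StrictMono f) (t : ℕ) :
    ((univ.image f).filter (· < t)).card = (univ.filter (fun i => f i < t)).card := by
  rw [Finset.filter_image, card_image_of_injective _ hf.injective]

lemma dom_iff_pointwise {k : ℕ} (f g : Fin k → ℕ) (hf : StrictMono f) (hg : StrictMono g) :
    Dom (univ.image f) (univ.image g) ↔ ∀ i, f i ≤ g i := by
  constructor
  · intro h i
    by_contra hc
    push_neg at hc
    have ht := h (g i + 1)
    rw [card_filter_lt_image f hf, card_filter_lt_image g hg] at ht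
    have h1 : Iic i ⊆ univ.filter (fun j => g j < g i + 1) := by
      intro j hj
      simp only [mem_filter, mem_univ, true_and]
      have := hg.monotone (mem_Iic.1 hj)
      omega
    have h2 : univ.filter (fun j => f j < g i + 1) ⊆ Iio i := by
      intro j hj
      simp only [mem_filter, mem_univ, true_and] at hj
      rw [mem_Iio, ← hf.lt_iff_lt]
      omega
    have h3 : (Iio i).card < (Iic i).card := by
      apply card_lt_card
      rw [Finset.ssubset_iff_of_subset (fun x hx => mem_Iic.2 (le_of_lt (mem_Iio.1 hx)))]
      exact ⟨i, mem_Iic.2 le_rfl, fun hcon => absurd (mem_Iio.1 hcon) (lt_irrefl i)⟩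
    have h4 := card_le_card h1
    have h5 := card_le_card h2
    omega
  · intro h t
    rw [card_filter_lt_image f hf, card_filter_lt_image g hg]
    apply card_le_card
    intro j hj
    simp only [mem_filter, mem_univ, true_and] at hj ⊢
    have := h j
    omega

lemma strictMono_eq_of_image_eq {k : ℕ} {f g : Fin k → ℕ} (hf : StrictMono f)
    (hg : StrictMono g) (h : univ.image f = univ.image g) : f = g := by
  have hc : (univ.image f).card = k := by
    rw [card_image_of_injective _ hf.injective, card_univ, Fintype.card_fin]
  have h1 := orderEmbOfFin_unique hc (fun x => mem_image_of_mem f (mem_univ x)) hf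
  have h2 := orderEmbOfFin_unique hc (f := g)
    (fun x => by rw [h]; exact mem_image_of_mem g (mem_univ x)) hg
  exact h1.trans h2.symm

lemma image_orderEmbOfFin {k : ℕ} (A : Finset ℕ) (hAc : A.card = k) :
    univ.image (A.orderEmbOfFin hAc) = A := by
  apply coe_injective
  rw [coe_image, coe_univ, Set.image_univ, range_orderEmbOfFin]

open scoped Classical in
lemma count_eq (k n : ℕ) :
    (Finset.univ.filter (fun T : Fin k → Fin 2 → Fin n =>
        (∀ (i : Fin k) (j j' : Fin 2), j ≤ j' → T i j ≤ T i j') ∧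
        (∀ (i i' : Fin k) (j : Fin 2), i < i' → T i j < T i' j))).card = Fc n k k := by
  rw [Fc]
  apply card_bij (i := fun T _ =>
    (univ.image (fun i => ((T i 0 : ℕ))), univ.image (fun i => ((T i 1 : ℕ)))))
  · -- maps into target
    intro T hT
    simp only [mem_filter, mem_univ, true_and] at hT
    obtain ⟨hrow, hcol⟩ := hT
    have hm0 : StrictMono (fun i => ((T i 0 : ℕ))) := fun i i' h => by
      exact_mod_cast hcol i i' 0 h
    have hm1 : StrictMono (fun i => ((T i 1 : ℕ))) := fun i i' h => by
      exact_mod_cast hcol i i' 1 h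
    simp only [mem_filter, mem_product, mem_powersetCard]
    refine ⟨⟨⟨?_, ?_⟩, ?_, ?_⟩, ?_⟩
    · intro x hx
      obtain ⟨i, _, rfl⟩ := mem_image.1 hx
      exact mem_range.2 (T i 0).isLt
    · rw [card_image_of_injective _ hm0.injective, card_univ, Fintype.card_fin]
    · intro x hx
      obtain ⟨i, _, rfl⟩ := mem_image.1 hx
      exact mem_range.2 (T i 1).isLt
    · rw [card_image_of_injective _ hm1.injective, card_univ, Fintype.card_fin]
    · exact (dom_iff_pointwise _ _ hm0 hm1).2 fun i => by
        exact_mod_cast hrow i 0 1 (by decide)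
  · -- injective
    intro T1 h1 T2 h2 heq
    simp only [mem_filter, mem_univ, true_and] at h1 h2
    simp only [Prod.mk.injEq] at heq
    have hm0 : ∀ (T : Fin k → Fin 2 → Fin n),
        ((∀ (i : Fin k) (j j' : Fin 2), j ≤ j' → T i j ≤ T i j') ∧
        (∀ (i i' : Fin k) (j : Fin 2), i < i' → T i j < T i' j)) →
        ∀ j₀ : Fin 2, StrictMono (fun i => ((T i j₀ : ℕ))) := fun T hT j₀ i i' h => by
      exact_mod_cast hT.2 i i' j₀ h
    have e0 := strictMono_eq_of_image_eq (hm0 T1 h1 0) (hm0 T2 h2 0) heq.1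
    have e1 := strictMono_eq_of_image_eq (hm0 T1 h1 1) (hm0 T2 h2 1) heq.2
    funext i j
    have hj : j = 0 ∨ j = 1 := by omega
    rcases hj with rfl | rfl
    · exact Fin.ext (congrFun e0 i)
    · exact Fin.ext (congrFun e1 i)
  · -- surjective
    rintro ⟨A, B⟩ hp
    simp only [mem_filter, mem_product, mem_powersetCard] at hp
    obtain ⟨⟨⟨hA, hAc⟩, hB, hBc⟩, hd⟩ := hp
    set f : Fin k → ℕ := fun i => A.orderEmbOfFin hAc i with hfdef
    set g : Fin k → ℕ := fun i => B.orderEmbOfFin hBc i with hgdef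
    have hf : StrictMono f := (A.orderEmbOfFin hAc).strictMono
    have hg : StrictMono g := (B.orderEmbOfFin hBc).strictMono
    have hfA : univ.image f = A := image_orderEmbOfFin A hAc
    have hgB : univ.image g = B := image_orderEmbOfFin B hBc
    have hfr : ∀ i, f i < n := fun i =>
      mem_range.1 (hA (Finset.orderEmbOfFin_mem A hAc i))
    have hgr : ∀ i, g i < n := fun i =>
      mem_range.1 (hB (Finset.orderEmbOfFin_mem B hBc i))
    have hfg : ∀ i, f i ≤ g i := by
      rw [← dom_iff_pointwise f g hf hg, hfA, hgB]
      exact hd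
    refine ⟨fun i j => if j = 0 then (⟨f i, hfr i⟩ : Fin n) else ⟨g i, hgr i⟩, ?_, ?_⟩
    · simp only [mem_filter, mem_univ, true_and]
      constructor
      · intro i j j' hjj'
        have hj : j = 0 ∨ j = 1 := by omega
        have hj' : j' = 0 ∨ j' = 1 := by omega
        rcases hj with rfl | rfl <;> rcases hj' with rfl | rfl <;> simp_all
      · intro i i' j hii'
        by_cases hj : j = 0 <;> simp [hj, Fin.mk_lt_mk, hf hii', hg hii']
    · simp only [Prod.mk.injEq]
      constructor
      · rw [← hfA]
        apply image_congr
        intro i _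
        simp
      · rw [← hgB]
        apply image_congr
        intro i _
        simp

lemma prodQ (m k : ℕ) : ∏ i ∈ Icc (1:ℕ) k, ((m:ℚ) - i + 1) = (m.descFactorial k : ℚ) := by
  induction k with
  | zero => simp
  | succ k ih =>
    rw [Finset.prod_Icc_succ_top (by omega), ih]
    rcases le_or_gt k m with h | h
    · rw [Nat.descFactorial_succ]
      push_cast [Nat.cast_sub h]
      ring
    · rw [Nat.descFactorial_succ, Nat.descFactorial_of_lt h]
      simp

lemma dF_succ_q (m j : ℕ) : (m.descFactorial (j+1) : ℚ) = ((m:ℚ) - j) * m.descFactorial j := by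
  rcases le_or_gt j m with h | h
  · rw [Nat.descFactorial_succ]
    push_cast [Nat.cast_sub h]
    ring
  · rw [Nat.descFactorial_succ, Nat.descFactorial_of_lt h]
    simp

lemma dF_pred_self (k : ℕ) : (k+1).descFactorial k = Nat.factorial (k+1) := by
  have h := Nat.descFactorial_self (k+1)
  rw [Nat.descFactorial_succ] at h
  simpa using h

lemma choose_q (m j : ℕ) : (m.choose j : ℚ) = (m.descFactorial j : ℚ) / (Nat.factorial j : ℚ) := by
  rw [Nat.descFactorial_eq_factorial_mul_choose]
  push_cast
  rw [mul_comm, mul_div_assoc, div_self (by exact_mod_cast j.factorial_ne_zero), mul_one]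

lemma final_algebra (n k : ℕ) (hk : 1 ≤ k) :
    ∏ i ∈ Finset.Icc (1:ℕ) k, ∏ j ∈ Finset.Icc (1:ℕ) 2,
      (((n : ℚ) - (i:ℚ) + (j:ℚ)) / ((k : ℚ) + 2 - (i:ℚ) - (j:ℚ) + 1)) = Gq n k k := by
  obtain ⟨k', rfl⟩ : ∃ k', k = k' + 1 := ⟨k - 1, by omega⟩
  have hIcc2 : (Icc (1:ℕ) 2) = {1, 2} := rfl
  have step1 : ∀ i ∈ Icc (1:ℕ) (k'+1), ∏ j ∈ Finset.Icc (1:ℕ) 2,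
      (((n : ℚ) - (i:ℚ) + (j:ℚ)) / (((k'+1 : ℕ) : ℚ) + 2 - (i:ℚ) - (j:ℚ) + 1)) =
      (((n:ℚ) - i + 1) * ((n:ℚ) - i + 2)) /
        ((((k'+1:ℕ):ℚ) - i + 2) * (((k'+1:ℕ):ℚ) - i + 1)) := by
    intro i _
    rw [hIcc2, prod_pair (by omega)]
    push_cast
    field_simp
    ring
  rw [prod_congr rfl step1]
  have step2 : ∀ i ∈ Icc (1:ℕ) (k'+1),
      (((n:ℚ) - i + 1) * ((n:ℚ) - i + 2)) /
        ((((k'+1:ℕ):ℚ) - i + 2) * (((k'+1:ℕ):ℚ) - i + 1)) =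
      ((((n:ℕ):ℚ) - i + 1) * (((n+1:ℕ):ℚ) - i + 1)) /
        ((((k'+2:ℕ):ℚ) - i + 1) * ((((k'+1:ℕ)):ℚ) - i + 1)) := by
    intro i _
    push_cast
    ring_nf
  rw [prod_congr rfl step2]
  have hsplit : ∏ i ∈ Icc (1:ℕ) (k'+1),
      ((((n:ℕ):ℚ) - i + 1) * (((n+1:ℕ):ℚ) - i + 1)) /
        ((((k'+2:ℕ):ℚ) - i + 1) * ((((k'+1:ℕ)):ℚ) - i + 1)) =
      ((∏ i ∈ Icc (1:ℕ) (k'+1), (((n:ℕ):ℚ) - i + 1)) *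
       (∏ i ∈ Icc (1:ℕ) (k'+1), (((n+1:ℕ):ℚ) - i + 1))) /
      ((∏ i ∈ Icc (1:ℕ) (k'+1), (((k'+2:ℕ):ℚ) - i + 1)) *
       (∏ i ∈ Icc (1:ℕ) (k'+1), (((k'+1:ℕ):ℚ) - i + 1))) := by
    rw [prod_div_distrib, prod_mul_distrib, prod_mul_distrib]
  rw [hsplit, prodQ, prodQ, prodQ, prodQ]
  -- now pure descFactorial algebra
  have d1 : (n.descFactorial (k'+1) : ℚ) = ((n:ℚ) - k') * (n.descFactorial k' : ℚ) :=
    dF_succ_q n k'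
  have d2 : (n.descFactorial (k'+2) : ℚ) =
      ((n:ℚ) - (k'+1)) * (((n:ℚ) - k') * (n.descFactorial k' : ℚ)) := by
    rw [dF_succ_q n (k'+1), d1]
    push_cast
    ring
  have d3 : ((n+1).descFactorial (k'+1) : ℚ) = ((n:ℚ)+1) * (n.descFactorial k' : ℚ) := by
    rw [Nat.succ_descFactorial_succ]
    push_cast
    ring
  have d4 : ((k'+2).descFactorial (k'+1) : ℚ) = (Nat.factorial (k'+2) : ℚ) := by
    exact_mod_cast congrArg (Nat.cast : ℕ → ℚ) (dF_pred_self (k'+1))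
  have d5 : ((k'+1).descFactorial (k'+1) : ℚ) = (Nat.factorial (k'+1) : ℚ) := by
    exact_mod_cast congrArg (Nat.cast : ℕ → ℚ) (Nat.descFactorial_self (k'+1))
  rw [Gq, if_neg (Nat.succ_ne_zero k'), Nat.succ_sub_one]
  rw [choose_q n (k'+1), choose_q n (k'+1+1), choose_q n k']
  rw [d1, d3, d4, d5]
  rw [show n.descFactorial (k'+1+1) = n.descFactorial (k'+2) from rfl, d2]
  have hf1 : (Nat.factorial (k'+2) : ℚ) = ((k':ℚ)+2) * (((k':ℚ)+1) * (Nat.factorial k' : ℚ)) := by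
    rw [Nat.factorial_succ, Nat.factorial_succ]
    push_cast
    ring
  have hf2 : (Nat.factorial (k'+1) : ℚ) = ((k':ℚ)+1) * (Nat.factorial k' : ℚ) := by
    rw [Nat.factorial_succ]
    push_cast
    ring
  rw [hf1, hf2]
  have h0 : (Nat.factorial k' : ℚ) ≠ 0 := by exact_mod_cast k'.factorial_ne_zero
  have h1 : ((k':ℚ)+1) ≠ 0 := by positivity
  have h2 : ((k':ℚ)+2) ≠ 0 := by positivity
  field_simp
  ring
/-- The number of `k`-row, 2-column rectangular SSYT with entries in `[n]` equals
`a_{k,n,2}`. -/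
theorem count_two_column_ssyt
    (k n : ℕ) :
    ((Finset.univ.filter (fun T : Fin k → Fin 2 → Fin n =>
        (∀ (i : Fin k) (j j' : Fin 2), j ≤ j' → T i j ≤ T i j') ∧
        (∀ (i i' : Fin k) (j : Fin 2), i < i' → T i j < T i' j))).card : ℚ)
      = ∏ i ∈ Finset.Icc (1:ℕ) k, ∏ j ∈ Finset.Icc (1:ℕ) 2,
          (((n : ℚ) - (i:ℚ) + (j:ℚ)) / ((k : ℚ) + 2 - (i:ℚ) - (j:ℚ) + 1)) := by
  rcases Nat.eq_zero_or_pos k with rfl | hk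
  · rw [show Finset.Icc (1:ℕ) 0 = ∅ from rfl, prod_empty]
    rw [filter_true_of_mem (fun T _ => ⟨fun i => i.elim0, fun i => i.elim0⟩), card_univ]
    simp
  · rw [count_eq, Fc_closed n k k (by omega), ← final_algebra n k hk]
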